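/- Let I be an SMI instance in which every stable matching matches every man and every woman, let a be a positive integer, let I_T be the truncated instance of I at rank a, and suppose M is a stable matching of I with d_U(M) ≤ a. Then for every stable matching N of I_T that is woman-optimal in I_T (for every stable matching M' of I_T and every woman w matched in M', rank(w, N(w)) ≤ rank(w, M'(w))) and matches every woman, we have d_W(N) ≤ d_W(M). -/

import Mathlib

/-- An instance of the Stable Marriage problem with Incomplete lists (SMI):
men `U` and women `W`, each agent ranking a subset of the other side
in strict order of preference (represented as a duplicate-free list,
most-preferred first). -/
structure SMI (U W : Type) where
  mpref : U → List W
  wpref : W → List U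
  mpref_nodup : ∀ m, (mpref m).Nodup
  wpref_nodup : ∀ w, (wpref w).Nodup

namespace SMI

variable {U W : Type}

/-- The (1-based) rank of woman `w` on man `m`'s preference list. -/
def mrank [DecidableEq W] (I : SMI U W) (m : U) (w : W) : ℕ :=
  (I.mpref m).idxOf w + 1

/-- The (1-based) rank of man `m` on woman `w`'s preference list. -/
def wrank [DecidableEq U] (I : SMI U W) (w : W) (m : U) : ℕ :=
  (I.wpref w).idxOf m + 1

/-- `(m, w)` is an acceptable pair if each appears on the other's list. -/
def Acceptable (I : SMI U W) (m : U) (w : W) : Prop :=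
  w ∈ I.mpref m ∧ m ∈ I.wpref w

/-- A matching: a set of acceptable pairs in which every man and every
woman appears at most once. -/
def IsMatching (I : SMI U W) (M : Set (U × W)) : Prop :=
  (∀ p ∈ M, I.Acceptable p.1 p.2) ∧
  (∀ p ∈ M, ∀ q ∈ M, p.1 = q.1 → p = q) ∧
  (∀ p ∈ M, ∀ q ∈ M, p.2 = q.2 → p = q)

/-- Man `m` is matched in `M`. -/
def MMatched (M : Set (U × W)) (m : U) : Prop := ∃ w, (m, w) ∈ M

/-- Woman `w` is matched in `M`. -/
def WMatched (M : Set (U × W)) (w : W) : Prop := ∃ m, (m, w) ∈ M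

/-- `M` matches every man and every woman. -/
def Perfect (M : Set (U × W)) : Prop :=
  (∀ m : U, MMatched M m) ∧ (∀ w : W, WMatched M w)

/-- `(m, w)` is a blocking pair of `M`. -/
def Blocks [DecidableEq U] [DecidableEq W] (I : SMI U W) (M : Set (U × W))
    (m : U) (w : W) : Prop :=
  I.Acceptable m w ∧
  (¬ MMatched M m ∨ ∃ w', (m, w') ∈ M ∧ I.mrank m w < I.mrank m w') ∧
  (¬ WMatched M w ∨ ∃ m', (m', w) ∈ M ∧ I.wrank w m < I.wrank w m')

/-- A stable matching: a matching admitting no blocking pair. -/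
def IsStable [DecidableEq U] [DecidableEq W] (I : SMI U W) (M : Set (U × W)) : Prop :=
  I.IsMatching M ∧ ∀ m w, ¬ I.Blocks M m w

/-- The man-degree `d_U(M)`: the largest rank of any man in `M`. -/
noncomputable def dU [DecidableEq W] (I : SMI U W) (M : Set (U × W)) : ℕ :=
  sSup {r : ℕ | ∃ p ∈ M, r = I.mrank p.1 p.2}

/-- The woman-degree `d_W(M)`: the largest rank of any woman in `M`. -/
noncomputable def dW [DecidableEq U] (I : SMI U W) (M : Set (U × W)) : ℕ :=
  sSup {r : ℕ | ∃ p ∈ M, r = I.wrank p.2 p.1}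

/-- The regret-equality score `r(M) = |d_U(M) - d_W(M)|`. -/
noncomputable def rScore [DecidableEq U] [DecidableEq W] (I : SMI U W) (M : Set (U × W)) : ℕ :=
  ((I.dU M : ℤ) - (I.dW M : ℤ)).natAbs

/-- `M0` is a man-optimal and woman-pessimal stable matching of `I`. -/
def ManOptWomanPess [DecidableEq U] [DecidableEq W] (I : SMI U W)
    (M0 : Set (U × W)) : Prop :=
  I.IsStable M0 ∧ ∀ M, I.IsStable M →
    (∀ m w0 w, (m, w0) ∈ M0 → (m, w) ∈ M → I.mrank m w0 ≤ I.mrank m w) ∧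
    (∀ w m0 m, (m0, w) ∈ M0 → (m, w) ∈ M → I.wrank w m ≤ I.wrank w m0)

/-- `Mz` is a woman-optimal and man-pessimal stable matching of `I`. -/
def WomanOptManPess [DecidableEq U] [DecidableEq W] (I : SMI U W)
    (Mz : Set (U × W)) : Prop :=
  I.IsStable Mz ∧ ∀ M, I.IsStable M →
    (∀ w mz m, (mz, w) ∈ Mz → (m, w) ∈ M → I.wrank w mz ≤ I.wrank w m) ∧
    (∀ m wz w, (m, wz) ∈ Mz → (m, w) ∈ M → I.mrank m w ≤ I.mrank m wz)

/-- The truncated instance `I_T` of `I` at rank `a`: every pair `(m, w)` with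
`rank(m, w) > a` is deleted, i.e. each man's list is cut after his `a`-th
choice, and he is removed from the lists of the women thereby deleted. -/
def truncate [DecidableEq W] (I : SMI U W) (a : ℕ) : SMI U W where
  mpref m := (I.mpref m).take a
  wpref w := (I.wpref w).filter (fun m => decide (w ∈ (I.mpref m).take a))
  mpref_nodup m := ((I.mpref m).take_sublist a).nodup (I.mpref_nodup m)
  wpref_nodup w := (I.wpref_nodup w).filter _

end SMI

open List

open List

lemma sublist_indexOf_le {α : Type*} [DecidableEq α] {l' l : List α} (h : l' <+ l)
    (hn : l.Nodup) : ∀ {x y : α}, x ∈ l' → y ∈ l' →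
    l'.idxOf x ≤ l'.idxOf y → l.idxOf x ≤ l.idxOf y := by
  induction h with
  | slnil => intro x y hx _ _; exact absurd hx not_mem_nil
  | cons a h ih =>
    intro x y hx hy hle
    have hx' := h.subset hx
    have hy' := h.subset hy
    have hna : a ∉ _ := (nodup_cons.mp hn).1
    have hxa : a ≠ x := fun e => hna (e ▸ hx')
    have hya : a ≠ y := fun e => hna (e ▸ hy')
    rw [idxOf_cons_ne _ hxa, idxOf_cons_ne _ hya]
    exact Nat.succ_le_succ (ih (nodup_cons.mp hn).2 hx hy hle)
  | cons_cons a h ih =>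
    intro x y hx hy hle
    by_cases hxa : x = a
    · rw [idxOf_cons_eq _ hxa.symm]; exact Nat.zero_le _
    · have hya : y ≠ a := by
        intro e
        rw [idxOf_cons_eq _ e.symm] at hle
        have := Nat.le_zero.mp hle
        rw [idxOf_cons_ne _ (Ne.symm hxa)] at this
        exact Nat.succ_ne_zero _ this
      rw [idxOf_cons_ne _ (Ne.symm hxa)] at hle ⊢
      rw [idxOf_cons_ne _ (Ne.symm hya)] at hle ⊢
      exact Nat.succ_le_succ (ih (nodup_cons.mp hn).2
        ((mem_cons.mp hx).resolve_left hxa) ((mem_cons.mp hy).resolve_left hya) (Nat.le_of_succ_le_succ hle))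

lemma sublist_indexOf_lt {α : Type*} [DecidableEq α] {l' l : List α} (h : l' <+ l)
    (hn : l.Nodup) {x y : α} (hx : x ∈ l') (hy : y ∈ l')
    (hlt : l'.idxOf x < l'.idxOf y) : l.idxOf x < l.idxOf y := by
  have hne : x ≠ y := fun e => absurd (e ▸ hlt) (lt_irrefl _)
  have hle := sublist_indexOf_le h hn hx hy hlt.le
  have : List.idxOf x l ≠ List.idxOf y l := fun e =>
    hne ((idxOf_inj (h.subset hx)).mp e)
  omega

lemma indexOf_take {α : Type*} [DecidableEq α] {l : List α} {a : ℕ} {x : α}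
    (hx : x ∈ l.take a) : l.idxOf x = (l.take a).idxOf x := by
  conv_lhs => rw [← List.take_append_drop a l]
  exact idxOf_append_of_mem hx

lemma mem_take_of_indexOf_lt {α : Type*} [DecidableEq α] {l : List α} {a : ℕ} {x : α}
    (hx : x ∈ l) (h : l.idxOf x < a) : x ∈ l.take a := by
  have hlen : l.idxOf x < l.length := idxOf_lt_length_iff.mpr hx
  have hb : l.idxOf x < (l.take a).length := by simp [length_take]; omega
  have : (l.take a)[l.idxOf x]'hb = x := by
    rw [List.getElem_take]; exact getElem_idxOf hlen
  exact this ▸ List.getElem_mem hb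

/-- If `M` is a stable matching of `I` with `d_U(M) ≤ a`, then any
woman-optimal stable matching `N` of the truncated instance `I_T` matching
every woman satisfies `d_W(N) ≤ d_W(M)`. -/
theorem stmt_12 {U W : Type} [Fintype U] [Fintype W] [DecidableEq U] [DecidableEq W]
    (I : SMI U W)
    (hperf : ∀ M : Set (U × W), I.IsStable M → SMI.Perfect M)
    (a : ℕ) (ha : 0 < a)
    (M : Set (U × W)) (hM : I.IsStable M) (hdU : I.dU M ≤ a)
    (N : Set (U × W)) (hN : (I.truncate a).IsStable N)
    (hNopt : ∀ M' : Set (U × W), (I.truncate a).IsStable M' →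
      ∀ (w : W) (m m' : U), (m, w) ∈ N → (m', w) ∈ M' →
        (I.truncate a).wrank w m ≤ (I.truncate a).wrank w m')
    (hNw : ∀ w : W, SMI.WMatched N w) :
    I.dW N ≤ I.dW M := by

  classical
  have hMperf := hperf M hM
  -- every man's rank in M is at most a
  have hrank_a : ∀ p ∈ M, I.mrank p.1 p.2 ≤ a := by
    intro p hp
    have hfin : ({r : ℕ | ∃ p ∈ M, r = I.mrank p.1 p.2}).Finite := by
      have : {r : ℕ | ∃ p ∈ M, r = I.mrank p.1 p.2}
          = (fun p : U × W => I.mrank p.1 p.2) '' M := by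
        ext r; simp [Set.mem_image, eq_comm]
      rw [this]; exact (Set.toFinite M).image _
    exact le_trans (le_csSup hfin.bddAbove ⟨p, hp, rfl⟩) hdU
  -- M still consists of acceptable pairs in the truncated instance
  have hMT_acc : ∀ p ∈ M, (I.truncate a).Acceptable p.1 p.2 := by
    intro p hp
    have hacc := hM.1.1 p hp
    have h1 : p.2 ∈ (I.mpref p.1).take a := by
      apply mem_take_of_indexOf_lt hacc.1
      have := hrank_a p hp
      simp only [SMI.mrank] at this; omega
    refine ⟨h1, ?_⟩
    simp only [SMI.truncate, List.mem_filter, decide_eq_true_eq]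
    exact ⟨hacc.2, h1⟩
  -- M is stable in the truncated instance
  have hMT : (I.truncate a).IsStable M := by
    refine ⟨⟨hMT_acc, hM.1.2.1, hM.1.2.2⟩, ?_⟩
    intro m w hblk
    obtain ⟨hacc, hb1, hb2⟩ := hblk
    obtain ⟨w', hw', hlt1⟩ := hb1.resolve_left (not_not_intro (hMperf.1 m))
    obtain ⟨m', hm', hlt2⟩ := hb2.resolve_left (not_not_intro (hMperf.2 w))
    have haccI : I.Acceptable m w :=
      ⟨((I.mpref m).take_sublist a).subset hacc.1, by
        have := hacc.2
        simp only [SMI.truncate, List.mem_filter] at this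
        exact this.1⟩
    apply hM.2 m w
    refine ⟨haccI, Or.inr ⟨w', hw', ?_⟩, Or.inr ⟨m', hm', ?_⟩⟩
    · have e1 : (I.mpref m).idxOf w = ((I.mpref m).take a).idxOf w :=
        indexOf_take hacc.1
      have e2 : (I.mpref m).idxOf w' = ((I.mpref m).take a).idxOf w' :=
        indexOf_take (hMT_acc _ hw').1
      simp only [SMI.mrank, SMI.truncate] at hlt1 ⊢
      omega
    · have hm1 : m ∈ (I.wpref w).filter (fun u => decide (w ∈ (I.mpref u).take a)) := by
        have := hacc.2; simpa [SMI.truncate] using this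
      have hm2 : m' ∈ (I.wpref w).filter (fun u => decide (w ∈ (I.mpref u).take a)) := by
        have := (hMT_acc _ hm').2; simpa [SMI.truncate] using this
      simp only [SMI.wrank, SMI.truncate] at hlt2 ⊢
      have := sublist_indexOf_lt List.filter_sublist (I.wpref_nodup w) hm1 hm2
        (by omega)
      omega
  -- every rank achieved by N is at most d_W(M)
  have key : ∀ r ∈ {r : ℕ | ∃ p ∈ N, r = I.wrank p.2 p.1}, r ≤ I.dW M := by
    rintro r ⟨⟨m, w⟩, hpN, rfl⟩
    obtain ⟨m', hm'⟩ := hMperf.2 w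
    have h1 := hNopt M hMT w m m' hpN hm'
    have hm1 : m ∈ (I.wpref w).filter (fun u => decide (w ∈ (I.mpref u).take a)) := by
      have := (hN.1.1 _ hpN).2; simpa [SMI.truncate] using this
    have hm2 : m' ∈ (I.wpref w).filter (fun u => decide (w ∈ (I.mpref u).take a)) := by
      have := (hMT_acc _ hm').2; simpa [SMI.truncate] using this
    simp only [SMI.wrank, SMI.truncate] at h1
    have h2 := sublist_indexOf_le List.filter_sublist (I.wpref_nodup w) hm1 hm2
      (by omega)
    have hfin : ({r : ℕ | ∃ p ∈ M, r = I.wrank p.2 p.1}).Finite := by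
      have : {r : ℕ | ∃ p ∈ M, r = I.wrank p.2 p.1}
          = (fun p : U × W => I.wrank p.2 p.1) '' M := by
        ext r; simp [Set.mem_image, eq_comm]
      rw [this]; exact (Set.toFinite M).image _
    have h3 : I.wrank w m' ≤ I.dW M := le_csSup hfin.bddAbove ⟨(m', w), hm', rfl⟩
    simp only [SMI.wrank] at h3 ⊢
    omega
  exact csSup_le' key
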